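/- For fixed margins f : Y → ℝ, the link function h_y = (max(0, (f(y) + φ_β)/β + 1))^β, where φ_β solves ∑_y(max(0,(f(y)+φ_β)/β+1))^β = 1, converges pointwise as β → ∞ to the softmax: h_y → e^{f(y)} / ∑_{j∈Y} e^{f(j)}. -/

import Mathlib

open Filter Real

lemma key_ineq {x : ℝ} (h1 : -(1/2) ≤ x) (h2 : x ≤ 0) : Real.exp (x - 2*x^2) ≤ 1 + x := by
  have h3 := Real.add_one_le_exp (-(x - 2*x^2))
  have h4 := Real.exp_pos (x - 2*x^2)
  have h5 : Real.exp (x - 2*x^2) * Real.exp (-(x - 2*x^2)) = 1 := by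
    rw [← Real.exp_add]; simp
  nlinarith [sq_nonneg x, mul_pos h4 h4, mul_le_mul_of_nonneg_left h3 h4.le]

theorem link_tendsto_softmax (Y : Type*) [Fintype Y] [Nonempty Y] (f : Y → ℝ)
    (φ : ℝ → ℝ)
    (hφ : ∀ β : ℝ, 1 ≤ β → ∑ y, (max 0 ((f y + φ β) / β + 1)) ^ β = 1) :
    ∀ y : Y, Tendsto (fun β : ℝ => (max 0 ((f y + φ β) / β + 1)) ^ β) atTop
      (nhds (Real.exp (f y) / ∑ j, Real.exp (f j))) := by
  intro y
  set S : ℝ := ∑ j, Real.exp (f j) with hSdef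
  have hS : 0 < S := Finset.sum_pos (fun j _ => Real.exp_pos _) Finset.univ_nonempty
  obtain ⟨y₀, -, hy₀⟩ := Finset.exists_min_image Finset.univ f Finset.univ_nonempty
  set K : ℝ := Real.log S - f y₀ with hKdef
  have hfK : ∀ z, Real.exp (f z) ≤ S := fun z =>
    Finset.single_le_sum (fun j _ => (Real.exp_pos (f j)).le) (Finset.mem_univ z)
  have hK0 : 0 ≤ K := by
    have h := (Real.le_log_iff_exp_le hS).2 (hfK y₀)
    simp only [hKdef]; linarith
  -- Step A: all arguments are nonpositive
  have hA : ∀ β : ℝ, 1 ≤ β → ∀ z : Y, f z + φ β ≤ 0 := by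
    intro β hβ z
    by_contra h
    push_neg at h
    have hβ0 : (0:ℝ) < β := by linarith
    have hx : 1 < (f z + φ β)/β + 1 := by
      have : 0 < (f z + φ β)/β := div_pos h hβ0
      linarith
    have hx' : max 0 ((f z + φ β)/β + 1) = (f z + φ β)/β + 1 := max_eq_right (by linarith)
    have h1 : 1 < (max 0 ((f z + φ β)/β + 1)) ^ β := by
      rw [hx']
      exact (Real.one_lt_rpow_iff_of_pos (by linarith)).2 (Or.inl ⟨hx, hβ0⟩)
    have h2 : (max 0 ((f z + φ β)/β + 1)) ^ β ≤ 1 := by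
      have hs := hφ β hβ
      exact le_of_le_of_eq (Finset.single_le_sum
        (f := fun j => (max 0 ((f j + φ β)/β + 1)) ^ β)
        (fun j _ => Real.rpow_nonneg (le_max_left _ _) β) (Finset.mem_univ z)) hs
    linarith
  -- Term upper bound
  have hUB : ∀ β : ℝ, 1 ≤ β → ∀ z : Y,
      (max 0 ((f z + φ β)/β + 1)) ^ β ≤ Real.exp (f z + φ β) := by
    intro β hβ z
    have hβ0 : (0:ℝ) < β := by linarith
    have hbase : max 0 ((f z + φ β)/β + 1) ≤ Real.exp ((f z + φ β)/β) :=
      max_le (Real.exp_pos _).le (by linarith [Real.add_one_le_exp ((f z + φ β)/β)])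
    calc (max 0 ((f z + φ β)/β + 1)) ^ β ≤ (Real.exp ((f z + φ β)/β)) ^ β :=
          Real.rpow_le_rpow (le_max_left _ _) hbase hβ0.le
      _ = Real.exp (f z + φ β) := by
          rw [← Real.exp_mul, div_mul_cancel₀ _ hβ0.ne']
  -- Step B: lower bound on φ
  have hB : ∀ β : ℝ, 1 ≤ β → -Real.log S ≤ φ β := by
    intro β hβ
    have h1 : (1:ℝ) ≤ Real.exp (φ β) * S := by
      rw [← hφ β hβ]
      calc ∑ z, (max 0 ((f z + φ β)/β + 1)) ^ β
          ≤ ∑ z, Real.exp (f z + φ β) := Finset.sum_le_sum (fun z _ => hUB β hβ z)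
        _ = Real.exp (φ β) * S := by
            rw [hSdef, Finset.mul_sum]
            exact Finset.sum_congr rfl (fun z _ => by rw [← Real.exp_add, add_comm])
    have h2 : Real.exp (-Real.log S) ≤ Real.exp (φ β) := by
      rw [Real.exp_neg, Real.exp_log hS, inv_eq_one_div]
      exact (div_le_iff₀ hS).2 (by linarith)
    exact Real.exp_le_exp.1 h2
  -- Term lower bound for large β
  have hLB : ∀ β : ℝ, max 1 (2*K) ≤ β → ∀ z : Y,
      Real.exp (f z + φ β - 2*K^2/β) ≤ (max 0 ((f z + φ β)/β + 1)) ^ β := by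
    intro β hβ z
    have hβ1 : (1:ℝ) ≤ β := le_trans (le_max_left _ _) hβ
    have hβK : 2*K ≤ β := le_trans (le_max_right _ _) hβ
    have hβ0 : (0:ℝ) < β := by linarith
    have haK : -K ≤ f z + φ β := by
      have := hB β hβ1
      have := hy₀ z (Finset.mem_univ z)
      simp only [hKdef] at *; linarith
    have ha0 : f z + φ β ≤ 0 := hA β hβ1 z
    set u : ℝ := (f z + φ β)/β with hudef
    have hu2 : u ≤ 0 := div_nonpos_of_nonpos_of_nonneg ha0 hβ0.le
    have hu1 : -(1/2) ≤ u := by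
      rw [hudef, le_div_iff₀ hβ0]
      nlinarith
    have hmax : max 0 (u + 1) = u + 1 := max_eq_right (by linarith)
    have hkey := key_ineq hu1 hu2
    have h1 : (Real.exp (u - 2*u^2)) ^ β ≤ (u + 1) ^ β := by
      have := Real.rpow_le_rpow (Real.exp_pos _).le (by linarith : Real.exp (u - 2*u^2) ≤ u + 1) hβ0.le
      exact this
    have h2 : (Real.exp (u - 2*u^2)) ^ β = Real.exp (f z + φ β - 2*(f z + φ β)^2/β) := by
      rw [← Real.exp_mul]
      congr 1
      rw [hudef]
      field_simp
    have h3 : Real.exp (f z + φ β - 2*K^2/β) ≤ Real.exp (f z + φ β - 2*(f z + φ β)^2/β) := by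
      apply Real.exp_le_exp.2
      have ha2 : (f z + φ β)^2 ≤ K^2 := sq_le_sq' haK (by linarith)
      have : 2*(f z + φ β)^2/β ≤ 2*K^2/β := by
        apply div_le_div_of_nonneg_right (by linarith) hβ0.le
      linarith
    rw [hmax]
    calc Real.exp (f z + φ β - 2*K^2/β) ≤ Real.exp (f z + φ β - 2*(f z + φ β)^2/β) := h3
      _ = (Real.exp (u - 2*u^2)) ^ β := h2.symm
      _ ≤ (u + 1) ^ β := h1
  -- Step C: upper bound on φ
  have hC : ∀ β : ℝ, max 1 (2*K) ≤ β → φ β ≤ -Real.log S + 2*K^2/β := by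
    intro β hβ
    have hβ1 : (1:ℝ) ≤ β := le_trans (le_max_left _ _) hβ
    have h1 : Real.exp (φ β - 2*K^2/β) * S ≤ 1 := by
      rw [← hφ β hβ1]
      calc Real.exp (φ β - 2*K^2/β) * S
          = ∑ z, Real.exp (f z + φ β - 2*K^2/β) := by
            rw [hSdef, Finset.mul_sum]
            exact Finset.sum_congr rfl (fun z _ => by rw [← Real.exp_add]; ring_nf)
        _ ≤ ∑ z, (max 0 ((f z + φ β)/β + 1)) ^ β := Finset.sum_le_sum (fun z _ => hLB β hβ z)
    have h2 : Real.exp ((φ β - 2*K^2/β)) ≤ Real.exp (-Real.log S) := by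
      rw [Real.exp_neg, Real.exp_log hS, inv_eq_one_div]
      rw [le_div_iff₀ hS]
      linarith
    have := Real.exp_le_exp.1 h2
    linarith
  -- φ converges
  have hφlim : Tendsto φ atTop (nhds (-Real.log S)) := by
    have hupper : Tendsto (fun β : ℝ => -Real.log S + 2*K^2/β) atTop (nhds (-Real.log S)) := by
      have : Tendsto (fun β : ℝ => 2*K^2/β) atTop (nhds 0) := by
        have h := tendsto_inv_atTop_zero.const_mul (2*K^2)
        rw [mul_zero] at h
        simpa [div_eq_mul_inv] using h
      simpa using tendsto_const_nhds.add this
    apply tendsto_of_tendsto_of_tendsto_of_le_of_le' tendsto_const_nhds hupper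
    · filter_upwards [eventually_ge_atTop (max 1 (2*K))] with β hβ
      exact hB β (le_trans (le_max_left _ _) hβ)
    · filter_upwards [eventually_ge_atTop (max 1 (2*K))] with β hβ
      exact hC β hβ
  -- Final squeeze
  have hexp : Real.exp (f y + -Real.log S) = Real.exp (f y) / S := by
    rw [Real.exp_add, Real.exp_neg, Real.exp_log hS, div_eq_mul_inv]
  have h1 : Tendsto (fun β : ℝ => Real.exp (f y + φ β)) atTop (nhds (Real.exp (f y) / S)) := by
    rw [← hexp]
    exact (Real.continuous_exp.tendsto _).comp (tendsto_const_nhds.add hφlim)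
  have h2 : Tendsto (fun β : ℝ => Real.exp (f y + φ β - 2*K^2/β)) atTop
      (nhds (Real.exp (f y) / S)) := by
    rw [← hexp]
    have hd : Tendsto (fun β : ℝ => 2*K^2/β) atTop (nhds 0) := by
      have h := tendsto_inv_atTop_zero.const_mul (2*K^2)
      rw [mul_zero] at h
      simpa [div_eq_mul_inv] using h
    have : Tendsto (fun β : ℝ => f y + φ β - 2*K^2/β) atTop (nhds (f y + -Real.log S)) := by
      simpa using (tendsto_const_nhds.add hφlim).sub hd
    exact (Real.continuous_exp.tendsto _).comp this
  apply tendsto_of_tendsto_of_tendsto_of_le_of_le' h2 h1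
  · filter_upwards [eventually_ge_atTop (max 1 (2*K))] with β hβ
    exact hLB β hβ y
  · filter_upwards [eventually_ge_atTop (max 1 (2*K))] with β hβ
    exact hUB β (le_trans (le_max_left _ _) hβ) y
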